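/- (Liouville, converse direction) If a ≤ b ≤ c are positive integers and aT_x + bT_y + cT_z represents every nonnegative integer, then (a,b,c) is one of (1,1,1), (1,1,2), (1,1,4), (1,1,5), (1,2,2), (1,2,3), (1,2,4). -/
import Mathlib

def T (x : ℤ) : ℤ := x * (x + 1) / 2

lemma twoT (x : ℤ) : 2 * T x = x * (x + 1) := by
  have h : (2:ℤ) ∣ x * (x + 1) := (Int.even_mul_succ_self x).two_dvd
  unfold T
  exact Int.mul_ediv_cancel' h

lemma cls (x : ℤ) (h : x * (x + 1) ≤ 16) :
    x*(x+1)=0 ∨ x*(x+1)=2 ∨ x*(x+1)=6 ∨ x*(x+1)=12 := by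
  have h1 : x ≤ 3 := by nlinarith [sq_nonneg (x - 3), sq_nonneg (x + 4)]
  have h2 : -4 ≤ x := by nlinarith [sq_nonneg (x - 3), sq_nonneg (x + 4)]
  interval_cases x <;> norm_num

lemma Tnn (x : ℤ) : 0 ≤ x * (x + 1) := by
  rcases le_or_gt 0 x with hx | hx
  · exact mul_nonneg hx (by linarith)
  · have h2 : 0 ≤ -x * -(x+1) := mul_nonneg (by linarith) (by linarith)
    rwa [neg_mul_neg] at h2

lemma extract (a b c m : ℤ) (ha : 0 < a) (hab : a ≤ b) (hbc : b ≤ c) (hm : 2 * m ≤ 16)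
    (x y z : ℤ) (heq : a * T x + b * T y + c * T z = m) :
    ∃ X Y Z : ℤ, (X=0∨X=2∨X=6∨X=12) ∧ (Y=0∨Y=2∨Y=6∨Y=12) ∧ (Z=0∨Z=2∨Z=6∨Z=12) ∧
      a * X + b * Y + c * Z = 2 * m := by
  refine ⟨x*(x+1), y*(y+1), z*(z+1), ?_, ?_, ?_, ?_⟩
  · apply cls
    have hb : 0 ≤ b * (y*(y+1)) := mul_nonneg (by linarith) (Tnn y)
    have hc : 0 ≤ c * (z*(z+1)) := mul_nonneg (by linarith) (Tnn z)
    have key : a * (x*(x+1)) + b * (y*(y+1)) + c * (z*(z+1)) = 2 * m := by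
      linear_combination (-a) * twoT x + (-b) * twoT y + (-c) * twoT z + 2 * heq
    have hX : a * (x*(x+1)) ≤ 16 := by linarith
    have := le_mul_of_one_le_left (Tnn x) ha
    linarith
  · apply cls
    have hb : 0 ≤ a * (x*(x+1)) := mul_nonneg (by linarith) (Tnn x)
    have hc : 0 ≤ c * (z*(z+1)) := mul_nonneg (by linarith) (Tnn z)
    have key : a * (x*(x+1)) + b * (y*(y+1)) + c * (z*(z+1)) = 2 * m := by
      linear_combination (-a) * twoT x + (-b) * twoT y + (-c) * twoT z + 2 * heq
    have hX : b * (y*(y+1)) ≤ 16 := by linarith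
    have := le_mul_of_one_le_left (Tnn y) (by linarith : (1:ℤ) ≤ b)
    linarith
  · apply cls
    have hb : 0 ≤ a * (x*(x+1)) := mul_nonneg (by linarith) (Tnn x)
    have hc : 0 ≤ b * (y*(y+1)) := mul_nonneg (by linarith) (Tnn y)
    have key : a * (x*(x+1)) + b * (y*(y+1)) + c * (z*(z+1)) = 2 * m := by
      linear_combination (-a) * twoT x + (-b) * twoT y + (-c) * twoT z + 2 * heq
    have hX : c * (z*(z+1)) ≤ 16 := by linarith
    have := le_mul_of_one_le_left (Tnn z) (by linarith : (1:ℤ) ≤ c)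
    linarith
  · linear_combination (-a) * twoT x + (-b) * twoT y + (-c) * twoT z + 2 * heq

theorem liouville_converse (a b c : ℤ) (ha : 0 < a) (hab : a ≤ b) (hbc : b ≤ c)
    (h : ∀ n : ℕ, ∃ x y z : ℤ, a * T x + b * T y + c * T z = (n : ℤ)) :
    (a, b, c) ∈ ({(1,1,1), (1,1,2), (1,1,4), (1,1,5), (1,2,2), (1,2,3), (1,2,4)} :
      Set (ℤ × ℤ × ℤ)) := by
  have ha1 : a = 1 := by
    obtain ⟨x, y, z, heq⟩ := h 1
    obtain ⟨X, Y, Z, hX, hY, hZ, he⟩ :=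
      extract a b c 1 ha hab hbc (by norm_num) x y z (by exact_mod_cast heq)
    rcases hX with rfl|rfl|rfl|rfl <;> rcases hY with rfl|rfl|rfl|rfl <;>
      rcases hZ with rfl|rfl|rfl|rfl <;> omega
  have hb2 : b ≤ 2 := by
    obtain ⟨x, y, z, heq⟩ := h 2
    obtain ⟨X, Y, Z, hX, hY, hZ, he⟩ :=
      extract a b c 2 ha hab hbc (by norm_num) x y z (by exact_mod_cast heq)
    rcases hX with rfl|rfl|rfl|rfl <;> rcases hY with rfl|rfl|rfl|rfl <;>
      rcases hZ with rfl|rfl|rfl|rfl <;> omega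
  simp only [Set.mem_insert_iff, Set.mem_singleton_iff, Prod.mk.injEq]
  rcases (by omega : b = 1 ∨ b = 2) with hb | hb
  · -- b = 1, need c ∈ {1,2,4,5}
    have hc5 : c ≤ 5 := by
      obtain ⟨x, y, z, heq⟩ := h 5
      obtain ⟨X, Y, Z, hX, hY, hZ, he⟩ :=
        extract a b c 5 ha hab hbc (by norm_num) x y z (by exact_mod_cast heq)
      rcases hX with rfl|rfl|rfl|rfl <;> rcases hY with rfl|rfl|rfl|rfl <;>
        rcases hZ with rfl|rfl|rfl|rfl <;> omega
    have hc3 : c ≠ 3 := by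
      obtain ⟨x, y, z, heq⟩ := h 8
      obtain ⟨X, Y, Z, hX, hY, hZ, he⟩ :=
        extract a b c 8 ha hab hbc (by norm_num) x y z (by exact_mod_cast heq)
      rcases hX with rfl|rfl|rfl|rfl <;> rcases hY with rfl|rfl|rfl|rfl <;>
        rcases hZ with rfl|rfl|rfl|rfl <;> omega
    omega
  · -- b = 2, need c ≤ 4
    have hc4 : c ≤ 4 := by
      obtain ⟨x, y, z, heq⟩ := h 4
      obtain ⟨X, Y, Z, hX, hY, hZ, he⟩ :=
        extract a b c 4 ha hab hbc (by norm_num) x y z (by exact_mod_cast heq)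
      rcases hX with rfl|rfl|rfl|rfl <;> rcases hY with rfl|rfl|rfl|rfl <;>
        rcases hZ with rfl|rfl|rfl|rfl <;> omega
    omega
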